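/- Let N, M: A → B be quantum channels that are jointly covariant with respect to {(U(g), V(g))}_{g∈G} for a finite group G, and let D be a generalized divergence. Then the generalized channel divergence D(N‖M) = sup over all pure states ψ_{RA} with R ≅ A of D((id_R⊗N)(ψ_{RA}) ‖ (id_R⊗M)(ψ_{RA})) is equal to the same supremum restricted to pure states ψ_{RA} whose reduced state ψ_A is invariant under the symmetrizing channel, i.e., ψ_A = (1/|G|) ∑_{g∈G} U(g) ψ_A U(g)†. -/

import Mathlib

open scoped BigOperators Kronecker ComplexOrder
open Matrix MeasureTheory Filter

noncomputable section

abbrev Mat (n : ℕ) := Matrix (Fin n) (Fin n) ℂ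

/-- A density matrix: positive semidefinite with unit trace. -/
def IsDensity {ι : Type} [Fintype ι] (ρ : Matrix ι ι ℂ) : Prop :=
  ρ.PosSemidef ∧ ρ.trace = 1

/-- The trace norm ‖M‖₁ = tr √(MᴴM). -/
def traceNorm {ι : Type} [Fintype ι] [DecidableEq ι] (M : Matrix ι ι ℂ) : ℝ :=
  ((Matrix.posSemidef_conjTranspose_mul_self M).1.eigenvectorUnitary.1 *
    Matrix.diagonal (fun i => ((Real.sqrt ((Matrix.posSemidef_conjTranspose_mul_self M).1.eigenvalues i) : ℝ) : ℂ)) *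
    (star (Matrix.posSemidef_conjTranspose_mul_self M).1.eigenvectorUnitary : Matrix ι ι ℂ)).trace.re

/-- The rank-one operator |v⟩⟨v| associated to a vector. -/
def vecState {ι : Type} (v : ι → ℂ) : Matrix ι ι ℂ :=
  Matrix.of fun i j => v i * star (v j)

/-- Partial trace over the first tensor factor. -/
def ptraceLeft {R A : Type} [Fintype R] (M : Matrix (R × A) (R × A) ℂ) : Matrix A A ℂ :=
  Matrix.of fun a a' => ∑ r, M (r, a) (r, a')

/-- Partial trace over the second tensor factor. -/
def ptraceRight {A E : Type} [Fintype E] (M : Matrix (A × E) (A × E) ℂ) : Matrix A A ℂ :=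
  Matrix.of fun a a' => ∑ e, M (a, e) (a', e)

/-- The extension id_R ⊗ Φ of a linear map on matrices. -/
def idTensor {R A B : Type} (Φ : Matrix A A ℂ →ₗ[ℂ] Matrix B B ℂ) :
    Matrix (R × A) (R × A) ℂ →ₗ[ℂ] Matrix (R × B) (R × B) ℂ where
  toFun M := Matrix.of fun p q => Φ (Matrix.of fun a a' => M (p.1, a) (q.1, a')) p.2 q.2
  map_add' M N := by
    ext p q
    have h : (Matrix.of fun a a' => M (p.1, a) (q.1, a') + N (p.1, a) (q.1, a'))
        = (Matrix.of fun a a' => M (p.1, a) (q.1, a'))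
          + (Matrix.of fun a a' => N (p.1, a) (q.1, a')) := by
      ext a a'; simp [Matrix.add_apply]
    simp only [Matrix.of_apply, Matrix.add_apply]
    rw [h, map_add]
    simp [Matrix.add_apply]
  map_smul' c M := by
    ext p q
    have h : (Matrix.of fun a a' => c • M (p.1, a) (q.1, a'))
        = c • (Matrix.of fun a a' => M (p.1, a) (q.1, a')) := by
      ext a a'; simp [Matrix.smul_apply]
    simp only [Matrix.of_apply, Matrix.smul_apply]
    rw [h, Φ.map_smul]
    simp [Matrix.smul_apply]

/-- A linear map is completely positive and trace preserving (a quantum channel). -/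
def IsCPTP {A B : Type} [Fintype A] [Fintype B] (Φ : Matrix A A ℂ →ₗ[ℂ] Matrix B B ℂ) : Prop :=
  (∀ (r : ℕ) (M : Matrix (Fin r × A) (Fin r × A) ℂ), M.PosSemidef → (idTensor Φ M).PosSemidef)
    ∧ ∀ M : Matrix A A ℂ, (Φ M).trace = M.trace

/-- The tensor product Φ ⊗ Ψ of two linear maps on matrices. -/
def tensorMap {A B C D : Type} [Fintype A] [DecidableEq A] [Fintype C]
    (Φ : Matrix A A ℂ →ₗ[ℂ] Matrix B B ℂ) (Ψ : Matrix C C ℂ →ₗ[ℂ] Matrix D D ℂ) :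
    Matrix (A × C) (A × C) ℂ →ₗ[ℂ] Matrix (B × D) (B × D) ℂ where
  toFun M := Matrix.of fun p q => ∑ a : A, ∑ a' : A,
      Φ (Matrix.single a a' 1) p.1 q.1
        * Ψ (Matrix.of fun c c' => M (a, c) (a', c')) p.2 q.2
  map_add' M N := by
    ext p q
    have h : ∀ a a' : A, (Matrix.of fun c c' => M (a, c) (a', c') + N (a, c) (a', c'))
        = (Matrix.of fun c c' => M (a, c) (a', c'))
          + (Matrix.of fun c c' => N (a, c) (a', c')) := by
      intro a a'; ext c c'; simp [Matrix.add_apply]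
    simp only [Matrix.of_apply, Matrix.add_apply]
    rw [← Finset.sum_add_distrib]
    refine Finset.sum_congr rfl fun a _ => ?_
    rw [← Finset.sum_add_distrib]
    refine Finset.sum_congr rfl fun a' _ => ?_
    rw [h a a', map_add]
    simp [Matrix.add_apply, mul_add]
  map_smul' k M := by
    ext p q
    have h : ∀ a a' : A, (Matrix.of fun c c' => k * M (a, c) (a', c'))
        = k • (Matrix.of fun c c' => M (a, c) (a', c')) := by
      intro a a'; ext c c'; simp [Matrix.smul_apply, smul_eq_mul]
    simp only [Matrix.of_apply, Matrix.smul_apply, smul_eq_mul, RingHom.id_apply]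
    rw [Finset.mul_sum]
    refine Finset.sum_congr rfl fun a _ => ?_
    rw [Finset.mul_sum]
    refine Finset.sum_congr rfl fun a' _ => ?_
    rw [h a a', Ψ.map_smul]
    simp only [Matrix.smul_apply, smul_eq_mul]
    ring
  
/-- The n-fold tensor power Φ^{⊗n} of a linear map on matrices. -/
def powMap {A B : Type} [Fintype A] [DecidableEq A] [Fintype B] [DecidableEq B]
    (Φ : Matrix A A ℂ →ₗ[ℂ] Matrix B B ℂ) :
    (n : ℕ) → (Matrix (Fin n → A) (Fin n → A) ℂ →ₗ[ℂ] Matrix (Fin n → B) (Fin n → B) ℂ)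
  | 0 => (Matrix.reindexLinearEquiv ℂ ℂ (Equiv.ofUnique (Fin 0 → A) (Fin 0 → B))
      (Equiv.ofUnique (Fin 0 → A) (Fin 0 → B))).toLinearMap
  | (n + 1) =>
      (Matrix.reindexLinearEquiv ℂ ℂ (Fin.consEquiv fun _ : Fin (n + 1) => B).symm.symm
          (Fin.consEquiv fun _ : Fin (n + 1) => B).symm.symm).toLinearMap
        ∘ₗ tensorMap Φ (powMap Φ n)
        ∘ₗ (Matrix.reindexLinearEquiv ℂ ℂ (Fin.consEquiv fun _ : Fin (n + 1) => A).symm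
          (Fin.consEquiv fun _ : Fin (n + 1) => A).symm).toLinearMap

open scoped Classical in
/-- The von Neumann entropy (base 2), via the eigenvalues of a Hermitian matrix. -/
def vnEntropy {ι : Type} [Fintype ι] [DecidableEq ι] (ρ : Matrix ι ι ℂ) : ℝ :=
  if h : ρ.IsHermitian then ∑ i, -(h.eigenvalues i * Real.logb 2 (h.eigenvalues i)) else 0

/-- The function g(ε) = (1+ε)log₂(1+ε) − ε log₂ ε (with the convention 0·log 0 = 0). -/
def gfun (x : ℝ) : ℝ := (1 + x) * Real.logb 2 (1 + x) - x * Real.logb 2 x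

/-- A finite ensemble of density matrices. -/
structure Ensemble (A : Type) [Fintype A] where
  m : ℕ
  p : Fin m → ℝ
  p_nonneg : ∀ i, 0 ≤ p i
  p_sum : ∑ i, p i = 1
  ρ : Fin m → Matrix A A ℂ
  ρ_density : ∀ i, IsDensity (ρ i)

/-- A finite ensemble of pure states, given by unit vectors. -/
structure PureEnsemble (A : Type) [Fintype A] where
  m : ℕ
  p : Fin m → ℝ
  p_nonneg : ∀ i, 0 ≤ p i
  p_sum : ∑ i, p i = 1
  v : Fin m → (A → ℂ)
  pure : ∀ i, IsDensity (vecState (v i))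

/-- The Holevo information of a (channel given as a) linear map. -/
def holevoMap {A B : Type} [Fintype A] [Fintype B] [DecidableEq B]
    (Φ : Matrix A A ℂ →ₗ[ℂ] Matrix B B ℂ) : ℝ :=
  ⨆ e : Ensemble A,
    (vnEntropy (Φ (∑ i, (e.p i : ℂ) • e.ρ i)) - ∑ i, e.p i * vnEntropy (Φ (e.ρ i)))

/-- The classical capacity: the regularized Holevo information. -/
def classicalCapacity {A B : Type} [Fintype A] [DecidableEq A] [Fintype B] [DecidableEq B]
    (Φ : Matrix A A ℂ →ₗ[ℂ] Matrix B B ℂ) : ℝ :=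
  Filter.limsup (fun n : ℕ => holevoMap (powMap Φ n) / (n : ℝ)) Filter.atTop

/-- Half the diamond norm of the difference of two maps:
the supremum over reference sizes and density inputs of half the output trace distance. -/
def diamondDist {A B : Type} [Fintype A] [Fintype B] [DecidableEq B]
    (Φ Ψ : Matrix A A ℂ →ₗ[ℂ] Matrix B B ℂ) : ℝ :=
  ⨆ r : ℕ, ⨆ ρ : {ρ : Matrix (Fin r × A) (Fin r × A) ℂ // IsDensity ρ},
    (1 / 2) * traceNorm (idTensor Φ ρ.1 - idTensor Ψ ρ.1)

/-- The diamond norm of the difference of two maps (without the factor 1/2). -/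
def diamondDistFull {A B : Type} [Fintype A] [Fintype B] [DecidableEq B]
    (Φ Ψ : Matrix A A ℂ →ₗ[ℂ] Matrix B B ℂ) : ℝ :=
  ⨆ r : ℕ, ⨆ ρ : {ρ : Matrix (Fin r × A) (Fin r × A) ℂ // IsDensity ρ},
    traceNorm (idTensor Φ ρ.1 - idTensor Ψ ρ.1)

/-- Conjugation ρ ↦ W ρ Wᴴ as a linear map. -/
def conjMap {ι κ : Type} [Fintype ι] [Fintype κ] (W : Matrix κ ι ℂ) :
    Matrix ι ι ℂ →ₗ[ℂ] Matrix κ κ ℂ where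
  toFun ρ := W * ρ * Wᴴ
  map_add' ρ σ := by simp [Matrix.mul_add, Matrix.add_mul]
  map_smul' c ρ := by simp [Matrix.mul_smul, Matrix.smul_mul]

/-- A classical–quantum state ∑ₓ p(x) |x⟩⟨x| ⊗ ρ(x). -/
def cqState {X ι : Type} [DecidableEq X] (p : X → ℝ) (ρ : X → Matrix ι ι ℂ) :
    Matrix (X × ι) (X × ι) ℂ :=
  Matrix.of fun a b => if a.1 = b.1 then (p a.1 : ℂ) * ρ a.1 a.2 b.2 else 0

/-- A generalized divergence: a family of real functionals on pairs of matrices, one for each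
finite-dimensional system, satisfying the data-processing inequality under quantum channels. -/
structure GenDivergence where
  D : ∀ {ι : Type} [Fintype ι] [DecidableEq ι], Matrix ι ι ℂ → Matrix ι ι ℂ → ℝ
  data_proc : ∀ {ι κ : Type} [Fintype ι] [DecidableEq ι] [Fintype κ] [DecidableEq κ]
      (Λ : Matrix ι ι ℂ →ₗ[ℂ] Matrix κ κ ℂ), IsCPTP Λ →
      ∀ ρ σ : Matrix ι ι ℂ, IsDensity ρ → σ.PosSemidef → D (Λ ρ) (Λ σ) ≤ D ρ σ

/-- The direct-sum property of a generalized divergence on classical–quantum states. -/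
def HasDirectSum (𝒟 : GenDivergence) : Prop :=
  ∀ {X ι : Type} [Fintype X] [DecidableEq X] [Fintype ι] [DecidableEq ι]
    (p : X → ℝ), (∀ x, 0 ≤ p x) → (∑ x, p x) = 1 →
    ∀ (ρ σ : X → Matrix ι ι ℂ), (∀ x, IsDensity (ρ x)) → (∀ x, IsDensity (σ x)) →
    𝒟.D (cqState p ρ) (cqState p σ) = ∑ x, p x * 𝒟.D (ρ x) (σ x)

/-- The generalized channel divergence: optimization over pure inputs with reference R ≅ A. -/
def chanDiv (𝒟 : GenDivergence) {A B : Type} [Fintype A] [DecidableEq A]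
    [Fintype B] [DecidableEq B] (Φ Ψ : Matrix A A ℂ →ₗ[ℂ] Matrix B B ℂ) : ℝ :=
  ⨆ v : {v : A × A → ℂ // IsDensity (vecState v)},
    𝒟.D (idTensor Φ (vecState v.1)) (idTensor Ψ (vecState v.1))

/-- The maximally entangled state on A ⊗ A. -/
def maxEnt (A : Type) [Fintype A] [DecidableEq A] : Matrix (A × A) (A × A) ℂ :=
  vecState (fun p => if p.1 = p.2 then (((Real.sqrt (Fintype.card A))⁻¹ : ℝ) : ℂ) else 0)

/-- The Choi operator of a linear map on matrices. -/
def choi {A B : Type} [Fintype A] [DecidableEq A]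
    (Φ : Matrix A A ℂ →ₗ[ℂ] Matrix B B ℂ) : Matrix (A × B) (A × B) ℂ :=
  idTensor Φ (Matrix.of fun p q => if p.1 = p.2 ∧ q.1 = q.2 then 1 else 0)

/-- Separability of a bipartite operator: a finite sum of tensor products of
positive semidefinite operators. -/
def IsSepState {A B : Type} [Fintype A] [Fintype B]
    (M : Matrix (A × B) (A × B) ℂ) : Prop :=
  ∃ (k : ℕ) (P : Fin k → Matrix A A ℂ) (Q : Fin k → Matrix B B ℂ),
    (∀ i, (P i).PosSemidef) ∧ (∀ i, (Q i).PosSemidef) ∧ M = ∑ i, P i ⊗ₖ Q i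

/-- An entanglement-breaking channel: a channel whose Choi operator is separable. -/
def IsEBChannel {A B : Type} [Fintype A] [DecidableEq A] [Fintype B]
    (Φ : Matrix A A ℂ →ₗ[ℂ] Matrix B B ℂ) : Prop :=
  IsCPTP Φ ∧ IsSepState (choi Φ)

/-- φ is a purification (with reference system R on the left) of the state ρ. -/
def IsPurification {R A : Type} [Fintype R] [Fintype A]
    (φ : Matrix (R × A) (R × A) ℂ) (ρ : Matrix A A ℂ) : Prop :=
  (∃ v : R × A → ℂ, φ = vecState v) ∧ IsDensity φ ∧ ptraceLeft φ = ρ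

/-- The channel ρ ↦ tr_E (V ρ Vᴴ) induced by an isometry V : A → B ⊗ E. -/
def dilMap {A B E : Type} [Fintype A] [Fintype B] [Fintype E]
    (V : Matrix (B × E) A ℂ) : Matrix A A ℂ →ₗ[ℂ] Matrix B B ℂ where
  toFun ρ := ptraceRight (V * ρ * Vᴴ)
  map_add' ρ σ := by
    ext a a'
    simp [ptraceRight, Matrix.mul_add, Matrix.add_mul, Matrix.add_apply,
      Finset.sum_add_distrib]
  map_smul' c ρ := by
    ext a a'
    simp [ptraceRight, Matrix.mul_smul, Matrix.smul_mul, Matrix.smul_apply,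
      Finset.mul_sum, smul_eq_mul]

/-- The complementary channel ρ ↦ tr_B (V ρ Vᴴ) induced by an isometry V : A → B ⊗ E. -/
def complMap {A B E : Type} [Fintype A] [Fintype B] [Fintype E]
    (V : Matrix (B × E) A ℂ) : Matrix A A ℂ →ₗ[ℂ] Matrix E E ℂ where
  toFun ρ := ptraceLeft (V * ρ * Vᴴ)
  map_add' ρ σ := by
    ext a a'
    simp [ptraceLeft, Matrix.mul_add, Matrix.add_mul, Matrix.add_apply,
      Finset.sum_add_distrib]
  map_smul' c ρ := by
    ext a a'
    simp [ptraceLeft, Matrix.mul_smul, Matrix.smul_mul, Matrix.smul_apply,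
      Finset.mul_sum, smul_eq_mul]

/-- A Hadamard channel: some Stinespring dilation has entanglement-breaking complement. -/
def IsHadamardChan {A B : Type} [Fintype A] [DecidableEq A] [Fintype B] [DecidableEq B]
    (Φ : Matrix A A ℂ →ₗ[ℂ] Matrix B B ℂ) : Prop :=
  ∃ (e : ℕ) (V : Matrix (B × Fin e) A ℂ), Vᴴ * V = 1 ∧
    (∀ ρ, Φ ρ = ptraceRight (V * ρ * Vᴴ)) ∧ IsSepState (choi (complMap V))

/-- Covariance of a channel with respect to unitary representations of a group. -/
def CovariantChan {G A B : Type} [Group G] [Fintype A] [DecidableEq A]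
    [Fintype B] [DecidableEq B]
    (U : G →* Matrix.unitaryGroup A ℂ) (V : G →* Matrix.unitaryGroup B ℂ)
    (Φ : Matrix A A ℂ →ₗ[ℂ] Matrix B B ℂ) : Prop :=
  ∀ (g : G) (ρ : Matrix A A ℂ),
    (V g : Matrix B B ℂ) * Φ ρ * (V g : Matrix B B ℂ)ᴴ
      = Φ ((U g : Matrix A A ℂ) * ρ * (U g : Matrix A A ℂ)ᴴ)

/-- A unitary 1-design: averaging over the group sends every matrix to tr(ρ)·I/d. -/
def IsOneDesign {G A : Type} [Group G] [Fintype G] [Fintype A] [DecidableEq A]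
    (U : G →* Matrix.unitaryGroup A ℂ) : Prop :=
  ∀ ρ : Matrix A A ℂ,
    (Fintype.card G : ℂ)⁻¹ • ∑ g, (U g : Matrix A A ℂ) * ρ * (U g : Matrix A A ℂ)ᴴ
      = (ρ.trace * (Fintype.card A : ℂ)⁻¹) • (1 : Matrix A A ℂ)

/-- Pauli X. -/
def σX : Mat 2 := !![0, 1; 1, 0]
/-- Pauli Y. -/
def σY : Mat 2 := !![0, -Complex.I; Complex.I, 0]
/-- Pauli Z. -/
def σZ : Mat 2 := !![1, 0; 0, -1]

/-- The Pauli twirl of a qubit channel. -/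
def pauliTwirl (Φ : Mat 2 →ₗ[ℂ] Mat 2) : Mat 2 →ₗ[ℂ] Mat 2 :=
  ((4 : ℂ)⁻¹) • (Φ + conjMap σX ∘ₗ Φ ∘ₗ conjMap σX + conjMap σY ∘ₗ Φ ∘ₗ conjMap σY
    + conjMap σZ ∘ₗ Φ ∘ₗ conjMap σZ)

/-- The amplitude damping channel with damping parameter p. -/
def ampDamp (p : ℝ) : Mat 2 →ₗ[ℂ] Mat 2 :=
  conjMap (!![1, 0; 0, ((Real.sqrt (1 - p) : ℝ) : ℂ)] : Mat 2)
    + conjMap (!![0, ((Real.sqrt p : ℝ) : ℂ); 0, 0] : Mat 2)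

/-- The qubit depolarizing channel with parameter p. -/
def depol (p : ℝ) : Mat 2 →ₗ[ℂ] Mat 2 :=
  (((1 - p : ℝ) : ℂ)) • LinearMap.id
    + (((p / 3 : ℝ) : ℂ)) • (conjMap σX + conjMap σY + conjMap σZ)

/-- The Z-dephasing channel with parameter p. -/
def deph (p : ℝ) : Mat 2 →ₗ[ℂ] Mat 2 :=
  (((1 - p : ℝ) : ℂ)) • LinearMap.id + ((p : ℝ) : ℂ) • conjMap σZ

/-- The entanglement-breaking parameter: distance to the nearest EB channel. -/
def ebParam {A B : Type} [Fintype A] [DecidableEq A] [Fintype B] [DecidableEq B]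
    (Φ : Matrix A A ℂ →ₗ[ℂ] Matrix B B ℂ) : ℝ :=
  ⨅ M : {M : Matrix A A ℂ →ₗ[ℂ] Matrix B B ℂ // IsEBChannel M}, diamondDist Φ M.1


noncomputable section Aux
open Matrix

namespace ChDAux

lemma real_iSup_eq {α β : Sort _} [Nonempty α] (f : α → ℝ) (g : β → ℝ)
    (h1 : ∀ b, ∃ a, g b = f a) (h2 : ∀ a, ∃ b, f a ≤ g b) :
    (⨆ a, f a) = ⨆ b, g b := by
  have hβ : Nonempty β := ⟨(h2 (Classical.arbitrary α)).choose⟩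
  by_cases hb : BddAbove (Set.range f)
  · have hbg : BddAbove (Set.range g) := by
      obtain ⟨c, hc⟩ := hb
      exact ⟨c, by rintro - ⟨b, rfl⟩; obtain ⟨a, ha⟩ := h1 b; rw [ha]; exact hc ⟨a, rfl⟩⟩
    refine le_antisymm (ciSup_le fun a => ?_) (ciSup_le fun b => ?_)
    · obtain ⟨b, hab⟩ := h2 a; exact hab.trans (le_ciSup hbg b)
    · obtain ⟨a, ha⟩ := h1 b; rw [ha]; exact le_ciSup hb a
  · have hbg : ¬ BddAbove (Set.range g) := by
      rintro ⟨c, hc⟩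
      refine hb ⟨c, ?_⟩
      rintro - ⟨a, rfl⟩
      obtain ⟨b, hab⟩ := h2 a
      exact hab.trans (hc ⟨b, rfl⟩)
    rw [iSup, iSup, csSup_of_not_bddAbove hb, csSup_of_not_bddAbove hbg]

lemma vecState_posSemidef {ι : Type} [Fintype ι] (v : ι → ℂ) : (vecState v).PosSemidef := by
  refine posSemidef_iff_dotProduct_mulVec.mpr ⟨?_, ?_⟩
  · ext i j; simp [vecState, conjTranspose_apply, mul_comm]
  · intro x
    have h : star x ⬝ᵥ (vecState v) *ᵥ x
        = (∑ i, star (x i) * v i) * star (∑ i, star (x i) * v i) := by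
      simp only [dotProduct, mulVec, vecState, of_apply, star_sum, star_mul', star_star]
      rw [Finset.sum_mul_sum]
      refine Finset.sum_congr rfl fun i _ => ?_
      rw [Finset.mul_sum]
      exact Finset.sum_congr rfl fun j _ => by simp only [Pi.star_apply]; ring
    rw [h]
    exact mul_star_self_nonneg _

lemma trace_vecState {ι : Type} [Fintype ι] (v : ι → ℂ) :
    (vecState v).trace = ∑ i, v i * star (v i) := by
  simp [Matrix.trace, vecState, Matrix.diag]

lemma trace_ptraceLeft {R A : Type} [Fintype R] [Fintype A]
    (M : Matrix (R × A) (R × A) ℂ) : (ptraceLeft M).trace = M.trace := by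
  simp only [Matrix.trace, Matrix.diag, ptraceLeft, of_apply, Fintype.sum_prod_type]
  exact Finset.sum_comm

lemma conjMap_vecState {ι κ : Type} [Fintype ι] [Fintype κ] (W : Matrix κ ι ℂ) (u : ι → ℂ) :
    conjMap W (vecState u) = vecState (W *ᵥ u) := by
  ext i j
  show (W * vecState u * Wᴴ) i j = _
  simp only [vecState, Matrix.mul_apply, of_apply, conjTranspose_apply, mulVec, dotProduct,
    star_sum, star_mul']
  rw [Finset.sum_mul_sum]
  rw [Finset.sum_comm]
  refine Finset.sum_congr rfl fun l _ => ?_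
  rw [Finset.sum_mul]
  refine Finset.sum_congr rfl fun k _ => ?_
  ring


lemma conjMap_apply {ι κ : Type} [Fintype ι] [Fintype κ] (W : Matrix κ ι ℂ) (M : Matrix ι ι ℂ) :
    conjMap W M = W * M * Wᴴ := rfl

lemma idTensor_apply {R A B : Type} (Φ : Matrix A A ℂ →ₗ[ℂ] Matrix B B ℂ)
    (M : Matrix (R × A) (R × A) ℂ) (p q : R × B) :
    idTensor Φ M p q = Φ (Matrix.of fun a a' => M (p.1, a) (q.1, a')) p.2 q.2 := rfl

lemma mul3_apply {ι κ μ ν : Type} [Fintype κ] [Fintype μ]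
    (A : Matrix ι κ ℂ) (M : Matrix κ μ ℂ) (C : Matrix μ ν ℂ) (i : ι) (j : ν) :
    (A * M * C) i j = ∑ k, ∑ l, A i k * M k l * C l j := by
  rw [Matrix.mul_apply]
  simp_rw [Matrix.mul_apply, Finset.sum_mul]
  exact Finset.sum_comm

lemma idTensor_sum {R A B J : Type} (s : Finset J)
    (Φ : J → (Matrix A A ℂ →ₗ[ℂ] Matrix B B ℂ)) (M : Matrix (R × A) (R × A) ℂ) :
    idTensor (R := R) (∑ j ∈ s, Φ j) M = ∑ j ∈ s, idTensor (R := R) (Φ j) M := by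
  ext p q
  simp [idTensor_apply, Matrix.sum_apply, LinearMap.sum_apply]

lemma kron_conjTranspose {l m n p : Type} (A : Matrix l m ℂ) (B : Matrix n p ℂ) :
    (A ⊗ₖ B)ᴴ = Aᴴ ⊗ₖ Bᴴ := by
  ext ⟨i, j⟩ ⟨k, l'⟩
  simp [conjTranspose_apply, star_mul', mul_comm]

lemma idTensor_conjMap {R A B : Type} [Fintype R] [DecidableEq R] [Fintype A] [Fintype B]
    (W : Matrix B A ℂ) (M : Matrix (R × A) (R × A) ℂ) :
    idTensor (R := R) (conjMap W) M = conjMap ((1 : Matrix R R ℂ) ⊗ₖ W) M := by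
  ext ⟨r1, b⟩ ⟨r2, b'⟩
  rw [idTensor_apply, conjMap_apply, conjMap_apply, mul3_apply, mul3_apply,
    kron_conjTranspose, conjTranspose_one]
  simp only [Fintype.sum_prod_type, kroneckerMap_apply, one_apply, conjTranspose_apply,
    of_apply, ite_mul, one_mul, zero_mul, mul_ite, mul_one, mul_zero, Finset.sum_ite_eq,
    Finset.mem_univ, if_true, Finset.sum_ite_irrel, Finset.sum_const_zero, Finset.sum_ite_eq']

lemma posSemidef_finsum {ι J : Type} [Fintype ι] (s : Finset J) (f : J → Matrix ι ι ℂ)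
    (h : ∀ j ∈ s, (f j).PosSemidef) : (∑ j ∈ s, f j).PosSemidef := by
  classical
  induction s using Finset.induction_on with
  | empty => simpa using Matrix.PosSemidef.zero
  | insert a t hj ih =>
      rw [Finset.sum_insert hj]
      exact (h a (Finset.mem_insert_self a t)).add
        (ih fun j hjt => h j (Finset.mem_insert_of_mem hjt))

lemma krausCPTP {A B J : Type} [Fintype A] [DecidableEq A] [Fintype B] [Fintype J]
    (K : J → Matrix B A ℂ) (h : ∑ j, (K j)ᴴ * K j = 1) :
    IsCPTP (∑ j, conjMap (K j)) := by
  constructor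
  · intro r M hM
    rw [idTensor_sum]
    refine posSemidef_finsum _ _ fun j _ => ?_
    rw [idTensor_conjMap, conjMap_apply]
    exact hM.mul_mul_conjTranspose_same _
  · intro M
    rw [LinearMap.sum_apply]
    rw [Matrix.trace_sum]
    have hj : ∀ j, (conjMap (K j) M).trace = ((K j)ᴴ * K j * M).trace := fun j => by
      rw [conjMap_apply, Matrix.trace_mul_cycle, Matrix.mul_assoc]
    calc ∑ j, (conjMap (K j) M).trace = ∑ j, ((K j)ᴴ * K j * M).trace := by simp [hj]
      _ = ((∑ j, (K j)ᴴ * K j) * M).trace := by rw [Finset.sum_mul, Matrix.trace_sum]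
      _ = M.trace := by rw [h, Matrix.one_mul]

lemma trace_idTensor {R A B : Type} [Fintype R] [Fintype A] [Fintype B]
    (Φ : Matrix A A ℂ →ₗ[ℂ] Matrix B B ℂ) (hΦ : ∀ X : Matrix A A ℂ, (Φ X).trace = X.trace)
    (M : Matrix (R × A) (R × A) ℂ) : (idTensor Φ M).trace = M.trace := by
  simp only [Matrix.trace, Matrix.diag, Fintype.sum_prod_type, idTensor_apply]
  refine Finset.sum_congr rfl fun r _ => ?_
  have := hΦ (Matrix.of fun a a' => M (r, a) (r, a'))
  simpa [Matrix.trace, Matrix.diag] using this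

lemma posSemidef_idTensor {A B : Type} [Fintype A] [Fintype B]
    {Φ : Matrix A A ℂ →ₗ[ℂ] Matrix B B ℂ} (hΦ : IsCPTP Φ)
    {R : Type} [Fintype R] (M : Matrix (R × A) (R × A) ℂ) (hM : M.PosSemidef) :
    (idTensor Φ M).PosSemidef := by
  classical
  set e := Fintype.equivFin R with he
  set M' : Matrix (Fin (Fintype.card R) × A) (Fin (Fintype.card R) × A) ℂ :=
    M.submatrix (⇑(Equiv.prodCongr e.symm (Equiv.refl A))) (⇑(Equiv.prodCongr e.symm (Equiv.refl A))) with hM'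
  have hM'p : M'.PosSemidef :=
    (posSemidef_submatrix_equiv (Equiv.prodCongr e.symm (Equiv.refl A))).2 hM
  have h2 := hΦ.1 (Fintype.card R) M' hM'p
  have key : idTensor Φ M
      = (idTensor Φ M').submatrix (⇑(Equiv.prodCongr e (Equiv.refl B))) (⇑(Equiv.prodCongr e (Equiv.refl B))) := by
    ext p q
    rw [submatrix_apply, idTensor_apply, idTensor_apply]
    have hxy : (Matrix.of fun a a' => M' ((Equiv.prodCongr e (Equiv.refl B) p).1, a)
          ((Equiv.prodCongr e (Equiv.refl B) q).1, a'))
        = Matrix.of fun a a' => M (p.1, a) (q.1, a') := by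
      ext a a'
      simp [hM']
    rw [hxy]
    rfl
  rw [key]
  exact (posSemidef_submatrix_equiv (Equiv.prodCongr e (Equiv.refl B))).2 h2

lemma isDensity_idTensor {A B : Type} [Fintype A] [Fintype B]
    {Φ : Matrix A A ℂ →ₗ[ℂ] Matrix B B ℂ} (hΦ : IsCPTP Φ)
    {R : Type} [Fintype R] (M : Matrix (R × A) (R × A) ℂ) (hM : IsDensity M) :
    IsDensity (idTensor Φ M) :=
  ⟨posSemidef_idTensor hΦ M hM.1, by rw [trace_idTensor Φ hΦ.2 M, hM.2]⟩

lemma idTensor_conj_comm {R R' A B : Type} [Fintype R] [Fintype R'] [Fintype A]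
    [DecidableEq A] [Fintype B] [DecidableEq B]
    (Φ : Matrix A A ℂ →ₗ[ℂ] Matrix B B ℂ) (W : Matrix R' R ℂ) (M : Matrix (R × A) (R × A) ℂ) :
    idTensor Φ (conjMap (W ⊗ₖ (1 : Matrix A A ℂ)) M)
      = conjMap (W ⊗ₖ (1 : Matrix B B ℂ)) (idTensor Φ M) := by
  ext ⟨r1, b⟩ ⟨r2, b'⟩
  have hslice : (Matrix.of fun a a' => (conjMap (W ⊗ₖ (1 : Matrix A A ℂ)) M) (r1, a) (r2, a'))
      = ∑ r : R, ∑ r' : R,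
          (W r1 r * star (W r2 r')) • (Matrix.of fun a a' => M (r, a) (r', a')) := by
    ext a a'
    simp only [of_apply, Matrix.sum_apply, Matrix.smul_apply, smul_eq_mul]
    rw [conjMap_apply, mul3_apply, kron_conjTranspose, conjTranspose_one]
    simp only [Fintype.sum_prod_type, kroneckerMap_apply, one_apply, conjTranspose_apply,
      of_apply, ite_mul, one_mul, zero_mul, mul_ite, mul_one, mul_zero, Finset.sum_ite_eq,
      Finset.mem_univ, if_true, Finset.sum_ite_irrel, Finset.sum_const_zero, Finset.sum_ite_eq']
    exact Finset.sum_congr rfl fun r _ => Finset.sum_congr rfl fun r' _ => by ring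
  rw [idTensor_apply]
  rw [hslice]
  rw [map_sum]
  simp only [map_sum, LinearMap.map_smul, Matrix.sum_apply, Matrix.smul_apply, smul_eq_mul]
  rw [conjMap_apply, mul3_apply, kron_conjTranspose, conjTranspose_one]
  simp only [Fintype.sum_prod_type, kroneckerMap_apply, one_apply, conjTranspose_apply,
    idTensor_apply, ite_mul, one_mul, zero_mul, mul_ite, mul_one, mul_zero, Finset.sum_ite_eq,
    Finset.mem_univ, if_true, Finset.sum_ite_irrel, Finset.sum_const_zero, Finset.sum_ite_eq']
  exact Finset.sum_congr rfl fun r _ => Finset.sum_congr rfl fun r' _ => by ring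

lemma kron_one_mulVec {R R' S : Type} [Fintype R] [Fintype S] [DecidableEq S]
    (W : Matrix R' R ℂ) (X : Matrix R S ℂ) :
    (W ⊗ₖ (1 : Matrix S S ℂ)) *ᵥ (fun p : R × S => X p.1 p.2)
      = fun p : R' × S => (W * X) p.1 p.2 := by
  funext p
  simp only [mulVec, dotProduct, Fintype.sum_prod_type, kroneckerMap_apply, one_apply,
    Matrix.mul_apply, mul_ite, ite_mul, mul_zero, zero_mul, mul_one,
    Finset.sum_ite_eq, Finset.mem_univ, if_true]



open scoped MatrixOrder in
def sqrtOf {S : Type} [Fintype S] [DecidableEq S] {A : Matrix S S ℂ} (_h : A.PosSemidef) :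
    Matrix S S ℂ :=
  CFC.sqrt A

open scoped MatrixOrder in
lemma sqrtOf_herm {S : Type} [Fintype S] [DecidableEq S] {A : Matrix S S ℂ}
    (h : A.PosSemidef) : (sqrtOf h)ᴴ = sqrtOf h :=
  (CFC.sqrt_nonneg A).posSemidef.1.eq

open scoped MatrixOrder in
lemma sqrtOf_mul_self {S : Type} [Fintype S] [DecidableEq S] {A : Matrix S S ℂ}
    (h : A.PosSemidef) : sqrtOf h * sqrtOf h = A :=
  CFC.sqrt_mul_sqrt_self A h.nonneg

lemma pinv_exists {S : Type} [Fintype S] [DecidableEq S] (Gm : Matrix S S ℂ)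
    (hG : Gm.PosSemidef) : ∃ P Pi : Matrix S S ℂ,
      Pᴴ = P ∧ Piᴴ = Pi ∧ P * Gm = Pi ∧ P * Gm * P = P ∧ Pi * Gm = Gm := by
  classical
  have hH : Gm.IsHermitian := hG.1
  set C : Matrix S S ℂ := (hH.eigenvectorUnitary : Matrix S S ℂ) with hC
  set d : S → ℂ := fun i => ((hH.eigenvalues i : ℝ) : ℂ) with hd
  set f : S → ℂ := fun i =>
    if hH.eigenvalues i = 0 then 0 else (((hH.eigenvalues i)⁻¹ : ℝ) : ℂ) with hf
  set ind : S → ℂ := fun i => if hH.eigenvalues i = 0 then 0 else 1 with hind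
  have hCC : Cᴴ * C = 1 := by
    have h := hH.eigenvectorUnitary.2
    rw [Matrix.mem_unitaryGroup_iff'] at h
    simpa [Matrix.star_eq_conjTranspose] using h
  have hspec : Gm = C * Matrix.diagonal d * Cᴴ := by
    have h := hH.spectral_theorem
    exact h
  have hmul : ∀ E F : S → ℂ, (C * Matrix.diagonal E * Cᴴ) * (C * Matrix.diagonal F * Cᴴ)
      = C * Matrix.diagonal (fun i => E i * F i) * Cᴴ := by
    intro E F
    have h1 : (C * Matrix.diagonal E * Cᴴ) * (C * Matrix.diagonal F * Cᴴ)
        = C * (Matrix.diagonal E * (Cᴴ * C) * Matrix.diagonal F) * Cᴴ := by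
      noncomm_ring
    rw [h1, hCC, Matrix.mul_one, Matrix.diagonal_mul_diagonal]
  have hfd : (fun i => f i * d i) = ind := by
    funext i
    by_cases h : hH.eigenvalues i = 0
    · simp [hf, hd, hind, h]
    · simp only [hf, hd, hind, if_neg h]
      rw [← Complex.ofReal_mul, inv_mul_cancel₀ h, Complex.ofReal_one]
  have hindd : (fun i => ind i * d i) = d := by
    funext i
    by_cases h : hH.eigenvalues i = 0 <;> simp [hind, hd, h]
  have hindf : (fun i => ind i * f i) = f := by
    funext i
    by_cases h : hH.eigenvalues i = 0 <;> simp [hind, hf, h]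
  have hdiagherm : ∀ E : S → ℂ, (∀ i, star (E i) = E i) → (C * Matrix.diagonal E * Cᴴ)ᴴ
      = C * Matrix.diagonal E * Cᴴ := by
    intro E hE
    have h1 : star E = E := funext hE
    rw [Matrix.conjTranspose_mul, Matrix.conjTranspose_mul, Matrix.conjTranspose_conjTranspose,
      Matrix.diagonal_conjTranspose, h1]
    noncomm_ring
  refine ⟨C * Matrix.diagonal f * Cᴴ, C * Matrix.diagonal ind * Cᴴ, ?_, ?_, ?_, ?_, ?_⟩
  · refine hdiagherm f fun i => ?_
    by_cases h : hH.eigenvalues i = 0 <;> simp [hf, h, Complex.conj_ofReal]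
  · refine hdiagherm ind fun i => ?_
    by_cases h : hH.eigenvalues i = 0 <;> simp [hind, h]
  · conv_lhs => rw [hspec]
    rw [hmul, hfd]
  · conv_lhs => rw [hspec]
    rw [hmul, hfd, hmul, hindf]
  · conv_lhs => rw [hspec]
    rw [hmul, hindd]
    exact hspec.symm

lemma transfer_exists {R R' S : Type} [Fintype R] [DecidableEq R] [Fintype R'] [DecidableEq R']
    [Fintype S] [DecidableEq S] [Nonempty R']
    (X : Matrix R S ℂ) (Y : Matrix R' S ℂ) (hGram : Xᴴ * X = Yᴴ * Y) :
    ∃ κ : Option R → Matrix R' R ℂ,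
      (∑ j, (κ j)ᴴ * κ j) = 1 ∧ κ none * X = Y ∧ ∀ i, κ (some i) * X = 0 := by
  classical
  obtain ⟨P, Pi, hPherm, hPiherm, hPG, hPGP, hPiG⟩ :=
    pinv_exists (Xᴴ * X) (Matrix.posSemidef_conjTranspose_mul_self X)
  have hYG : Yᴴ * Y = Xᴴ * X := hGram.symm
  have hann : ∀ {R0 : Type} [Fintype R0] (Z : Matrix R0 S ℂ),
      Zᴴ * Z = Xᴴ * X → Z * Pi = Z := by
    intro R0 _ Z hZ
    have hherm : (1 - Pi)ᴴ = 1 - Pi := by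
      rw [Matrix.conjTranspose_sub, Matrix.conjTranspose_one, hPiherm]
    have h0 : (Z * (1 - Pi))ᴴ * (Z * (1 - Pi)) = 0 := by
      rw [Matrix.conjTranspose_mul, hherm, ← Matrix.mul_assoc,
        Matrix.mul_assoc (1 - Pi) Zᴴ Z, hZ, sub_mul, one_mul, hPiG, sub_self, zero_mul]
    have h2 := Matrix.conjTranspose_mul_self_eq_zero.mp h0
    rw [Matrix.mul_sub, Matrix.mul_one, sub_eq_zero] at h2
    exact h2.symm
  have hKX : (Y * P * Xᴴ) * X = Y := by
    rw [Matrix.mul_assoc (Y * P) Xᴴ X, Matrix.mul_assoc Y P (Xᴴ * X), hPG]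
    exact hann Y hYG
  have hKT : (Y * P * Xᴴ)ᴴ = X * P * Yᴴ := by
    rw [Matrix.conjTranspose_mul, Matrix.conjTranspose_mul, Matrix.conjTranspose_conjTranspose,
      hPherm, ← Matrix.mul_assoc]
  have hKhK : (Y * P * Xᴴ)ᴴ * (Y * P * Xᴴ) = X * P * Xᴴ := by
    rw [hKT, ← Matrix.mul_assoc, ← Matrix.mul_assoc, Matrix.mul_assoc (X * P) Yᴴ Y, hYG,
      Matrix.mul_assoc X P (Xᴴ * X), Matrix.mul_assoc X (P * (Xᴴ * X)) P, hPGP]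
  have hQherm : (X * P * Xᴴ)ᴴ = X * P * Xᴴ := by
    rw [Matrix.conjTranspose_mul, Matrix.conjTranspose_mul, Matrix.conjTranspose_conjTranspose,
      hPherm, ← Matrix.mul_assoc]
  have hQQ : (X * P * Xᴴ) * (X * P * Xᴴ) = X * P * Xᴴ := by
    rw [← Matrix.mul_assoc, ← Matrix.mul_assoc, Matrix.mul_assoc (X * P) Xᴴ X,
      Matrix.mul_assoc X P (Xᴴ * X), Matrix.mul_assoc X (P * (Xᴴ * X)) P, hPGP]
  have hR1 : (1 - X * P * Xᴴ).PosSemidef := by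
    have h1 : (1 - X * P * Xᴴ)ᴴ * (1 - X * P * Xᴴ) = 1 - X * P * Xᴴ := by
      rw [Matrix.conjTranspose_sub, Matrix.conjTranspose_one, hQherm, sub_mul, one_mul,
        Matrix.mul_sub, Matrix.mul_one, hQQ]
      abel
    have h2 := Matrix.posSemidef_conjTranspose_mul_self (1 - X * P * Xᴴ)
    rwa [h1] at h2
  have hQX : (X * P * Xᴴ) * X = X := by
    rw [Matrix.mul_assoc (X * P) Xᴴ X, Matrix.mul_assoc X P (Xᴴ * X), hPG]
    exact hann X rfl
  have hR1X : (1 - X * P * Xᴴ) * X = 0 := by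
    rw [Matrix.sub_mul, Matrix.one_mul, hQX, sub_self]
  have hSqX : (sqrtOf hR1) * X = 0 := by
    have h1 : ((sqrtOf hR1) * X)ᴴ * ((sqrtOf hR1) * X) = 0 := by
      rw [Matrix.conjTranspose_mul, ← Matrix.mul_assoc, Matrix.mul_assoc Xᴴ (sqrtOf hR1)ᴴ (sqrtOf hR1),
        sqrtOf_herm hR1, sqrtOf_mul_self hR1, Matrix.mul_assoc, hR1X, Matrix.mul_zero]
    exact Matrix.conjTranspose_mul_self_eq_zero.mp h1
  obtain ⟨p0⟩ := (inferInstance : Nonempty R')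
  refine ⟨fun j => Option.casesOn j (Y * P * Xᴴ)
      (fun i => Matrix.of fun p r => (if p = p0 then (1 : ℂ) else 0) * (sqrtOf hR1) i r),
      ?_, hKX, ?_⟩
  · rw [Fintype.sum_option]
    have hLsum : (∑ i : R, ((Matrix.of fun p r => (if p = p0 then (1 : ℂ) else 0)
          * (sqrtOf hR1) i r) : Matrix R' R ℂ)ᴴ * (Matrix.of fun p r =>
          (if p = p0 then (1 : ℂ) else 0) * (sqrtOf hR1) i r))
        = (sqrtOf hR1)ᴴ * (sqrtOf hR1) := by
      ext r r'
      simp only [Matrix.sum_apply, Matrix.mul_apply, Matrix.conjTranspose_apply, of_apply,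
        star_mul', apply_ite star, star_one, star_zero, ite_mul, mul_ite, one_mul, zero_mul,
        mul_zero, mul_one]
      rw [Finset.sum_comm]
      simp [Finset.sum_ite_eq']
    rw [hLsum, sqrtOf_herm hR1, sqrtOf_mul_self hR1, hKhK]
    abel
  · intro i
    ext p s
    simp only [Matrix.mul_apply, of_apply, ite_mul, one_mul, zero_mul, Matrix.zero_apply]
    have h1 : ∑ r, (sqrtOf hR1) i r * X r s = 0 := by
      have := congrFun (congrFun hSqX i) s
      simpa [Matrix.mul_apply] using this
    simp [Finset.sum_ite, h1]


lemma sum_kron {J R R' S T : Type} [Fintype R] (s : Finset J)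
    (A : J → Matrix R R' ℂ) (B : Matrix S T ℂ) :
    (∑ j ∈ s, A j) ⊗ₖ B = ∑ j ∈ s, (A j ⊗ₖ B) := by
  ext ⟨i, k⟩ ⟨i', k'⟩
  simp [Matrix.sum_apply, Finset.sum_mul]

lemma sandwich {B : Type} [Fintype B] [DecidableEq B] (Vm X : Matrix B B ℂ)
    (hVV : Vmᴴ * Vm = 1) : Vmᴴ * (Vm * X * Vmᴴ) * Vm = X := by
  have h1 : Vmᴴ * (Vm * X * Vmᴴ) * Vm = (Vmᴴ * Vm) * X * (Vmᴴ * Vm) := by noncomm_ring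
  rw [h1, hVV, Matrix.one_mul, Matrix.mul_one]

/-- bra of a group element: the partial isometry selecting the `g`-block. -/
def bra {G A : Type} [DecidableEq G] [DecidableEq A] (g : G) : Matrix A (G × A) ℂ :=
  Matrix.of fun r p => if p = (g, r) then 1 else 0

lemma bra_sum {G A : Type} [Fintype G] [DecidableEq G] [Fintype A] [DecidableEq A] :
    ∑ g : G, ((bra g : Matrix A (G × A) ℂ)ᴴ * (bra g : Matrix A (G × A) ℂ)) = 1 := by
  ext p q
  have h1 : ((∑ g : G, ((bra g : Matrix A (G × A) ℂ)ᴴ * (bra g : Matrix A (G × A) ℂ))) : Matrix (G × A) (G × A) ℂ) p q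
      = ∑ x : G × A, (if p = x then (1 : ℂ) else 0) * (if q = x then 1 else 0) := by
    rw [Fintype.sum_prod_type]
    simp only [Matrix.sum_apply, Matrix.mul_apply, conjTranspose_apply, bra, of_apply,
      apply_ite star, star_one, star_zero]
  rw [h1]
  simp only [ite_mul, one_mul, zero_mul, Finset.sum_ite_eq, Finset.mem_univ, if_true]
  rw [Matrix.one_apply]
  by_cases h : p = q <;> simp [h, eq_comm]

lemma conj_braKron {G A B : Type} [Fintype G] [DecidableEq G] [Fintype A] [DecidableEq A]
    [Fintype B] (g : G) (W : Matrix B B ℂ) (Z : Matrix ((G × A) × B) ((G × A) × B) ℂ) :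
    conjMap ((bra g : Matrix A (G × A) ℂ) ⊗ₖ W) Z
      = Matrix.of fun p q : A × B =>
          (W * (Matrix.of fun β β' => Z ((g, p.1), β) ((g, q.1), β')) * Wᴴ) p.2 q.2 := by
  ext ⟨r, b⟩ ⟨r', b'⟩
  rw [conjMap_apply, mul3_apply, of_apply, mul3_apply, kron_conjTranspose]
  simp only [Fintype.sum_prod_type, kroneckerMap_apply, bra, of_apply, conjTranspose_apply,
    apply_ite star, star_one, star_zero, ite_mul, mul_ite, zero_mul, mul_zero, one_mul,
    mul_one, Finset.sum_ite_eq, Finset.sum_ite_eq', Finset.mem_univ, if_true,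
    Finset.sum_ite_irrel, Finset.sum_const_zero]

lemma phi_slice {G A : Type} [Fintype G] [Fintype A]
    (U : G → Matrix A A ℂ) (v : A × A → ℂ) (cG : ℂ) (w : (G × A) × A → ℂ)
    (hw : ∀ q : (G × A) × A, w q = cG * ∑ a1, U q.1.1 q.2 a1 * v (q.1.2, a1))
    (g g' : G) (r r' : A) :
    (Matrix.of fun a a' => vecState w ((g, r), a) ((g', r'), a'))
      = (cG * star cG) •
        (U g * (Matrix.of fun a a' => vecState v (r, a) (r', a')) * (U g')ᴴ) := by
  have expand : ∀ (x y : ℂ) (F Q : A → ℂ), (x * ∑ a1, F a1) * star (y * ∑ a2, Q a2)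
      = (x * star y) * ∑ a1, ∑ a2, F a1 * star (Q a2) := by
    intro x y F Q
    calc (x * ∑ a1, F a1) * star (y * ∑ a2, Q a2)
        = (x * star y) * ((∑ a1, F a1) * (∑ a2, star (Q a2))) := by
          rw [star_mul', star_sum]; ring
      _ = (x * star y) * ∑ a1, ∑ a2, F a1 * star (Q a2) := by rw [Finset.sum_mul_sum]
  ext a a'
  simp only [vecState, of_apply, Matrix.smul_apply, smul_eq_mul]
  rw [hw ((g, r), a), hw ((g', r'), a'), expand, mul3_apply]
  simp only [Finset.mul_sum]
  refine Finset.sum_congr rfl fun a1 _ => Finset.sum_congr rfl fun a2 _ => ?_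
  simp only [conjTranspose_apply, of_apply, star_mul']
  ring

lemma ptrace_phi {G A : Type} [Fintype G] [Fintype A]
    (U : G → Matrix A A ℂ) (v : A × A → ℂ) (cG : ℂ) (w : (G × A) × A → ℂ)
    (hw : ∀ q : (G × A) × A, w q = cG * ∑ a1, U q.1.1 q.2 a1 * v (q.1.2, a1)) :
    ptraceLeft (vecState w)
      = (cG * star cG) • ∑ g, U g * ptraceLeft (vecState v) * (U g)ᴴ := by
  have hsl := phi_slice U v cG w hw
  have h1 : ptraceLeft (vecState w)
      = ∑ g, ∑ r, (Matrix.of fun a a' => vecState w ((g, r), a) ((g, r), a')) := by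
    ext a a'
    simp only [ptraceLeft, of_apply, Matrix.sum_apply, Fintype.sum_prod_type]
  rw [h1]
  have h2 : ∀ g : G, (∑ r, (Matrix.of fun a a' => vecState w ((g, r), a) ((g, r), a')))
      = (cG * star cG) • (U g * ptraceLeft (vecState v) * (U g)ᴴ) := by
    intro g
    rw [Finset.sum_congr rfl fun r _ => hsl g g r r, ← Finset.smul_sum]
    congr 1
    rw [← Matrix.sum_mul, ← Matrix.mul_sum]
    congr 2
    ext a a'
    simp [ptraceLeft, Matrix.sum_apply]
  rw [Finset.sum_congr rfl fun g _ => h2 g, ← Finset.smul_sum]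

lemma avg_invariant {G A : Type} [Group G] [Fintype G] [Fintype A] [DecidableEq A]
    (U : G →* Matrix.unitaryGroup A ℂ) (ρ : Matrix A A ℂ) :
    (Fintype.card G : ℂ)⁻¹ • ∑ g, (U g : Matrix A A ℂ) *
        ((Fintype.card G : ℂ)⁻¹ • ∑ h, (U h : Matrix A A ℂ) * ρ * (U h : Matrix A A ℂ)ᴴ) *
        (U g : Matrix A A ℂ)ᴴ
      = (Fintype.card G : ℂ)⁻¹ • ∑ h, (U h : Matrix A A ℂ) * ρ * (U h : Matrix A A ℂ)ᴴ := by
  have hcard0 : (Fintype.card G : ℂ) ≠ 0 := Nat.cast_ne_zero.mpr Fintype.card_ne_zero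
  have hterm : ∀ g : G, (U g : Matrix A A ℂ) *
      ((Fintype.card G : ℂ)⁻¹ • ∑ h, (U h : Matrix A A ℂ) * ρ * (U h : Matrix A A ℂ)ᴴ) *
      (U g : Matrix A A ℂ)ᴴ
      = (Fintype.card G : ℂ)⁻¹ • ∑ h, (U h : Matrix A A ℂ) * ρ * (U h : Matrix A A ℂ)ᴴ := by
    intro g
    rw [Matrix.mul_smul, Matrix.smul_mul]
    congr 1
    rw [Matrix.mul_sum, Matrix.sum_mul]
    refine Fintype.sum_equiv (Equiv.mulLeft g) _ _ fun h => ?_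
    have hco : ((U (g * h) : Matrix A A ℂ)) = (U g : Matrix A A ℂ) * (U h : Matrix A A ℂ) := by
      rw [_root_.map_mul]; rfl
    show (U g : Matrix A A ℂ) * ((U h : Matrix A A ℂ) * ρ * (U h : Matrix A A ℂ)ᴴ) *
        (U g : Matrix A A ℂ)ᴴ
      = (U (Equiv.mulLeft g h) : Matrix A A ℂ) * ρ * (U (Equiv.mulLeft g h) : Matrix A A ℂ)ᴴ
    have : (Equiv.mulLeft g h) = g * h := rfl
    rw [this, hco, Matrix.conjTranspose_mul]
    noncomm_ring
  rw [Finset.sum_congr rfl fun g _ => hterm g]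
  rw [Finset.sum_const, Finset.card_univ, ← Nat.cast_smul_eq_nsmul ℂ, smul_smul, smul_smul]
  congr 1
  field_simp

lemma trace_avg {G A : Type} [Fintype G] [Fintype A] [DecidableEq A]
    (U : G → Matrix.unitaryGroup A ℂ) (ρ : Matrix A A ℂ) (hρ : ρ.trace = 1)
    [Nonempty G] :
    ((Fintype.card G : ℂ)⁻¹ • ∑ g, (U g : Matrix A A ℂ) * ρ * (U g : Matrix A A ℂ)ᴴ).trace
      = 1 := by
  have hcard0 : (Fintype.card G : ℂ) ≠ 0 := Nat.cast_ne_zero.mpr Fintype.card_ne_zero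
  have h1 : ∀ g : G, ((U g : Matrix A A ℂ) * ρ * (U g : Matrix A A ℂ)ᴴ).trace = 1 := by
    intro g
    rw [Matrix.trace_mul_cycle]
    have h := (U g).2
    rw [Matrix.mem_unitaryGroup_iff'] at h
    have h2 : (U g : Matrix A A ℂ)ᴴ * (U g : Matrix A A ℂ) = 1 := by
      simpa [Matrix.star_eq_conjTranspose] using h
    rw [h2, Matrix.one_mul, hρ]
  rw [Matrix.trace_smul, Matrix.trace_sum]
  rw [Finset.sum_congr rfl fun g _ => h1 g]
  simp [Finset.card_univ, inv_mul_cancel₀ hcard0]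


lemma key_step {G A B : Type} [Group G] [Fintype G] [DecidableEq G]
    [Fintype A] [DecidableEq A] [Nonempty A] [Fintype B] [DecidableEq B]
    (U : G →* Matrix.unitaryGroup A ℂ) (V : G →* Matrix.unitaryGroup B ℂ)
    (N M : Matrix A A ℂ →ₗ[ℂ] Matrix B B ℂ) (hN : IsCPTP N) (hM : IsCPTP M)
    (hcovN : CovariantChan U V N) (hcovM : CovariantChan U V M) (𝒟 : GenDivergence)
    (v : A × A → ℂ) (hv : IsDensity (vecState v)) :
    ∃ vb : A × A → ℂ, IsDensity (vecState vb) ∧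
      (ptraceLeft (vecState vb) = (Fintype.card G : ℂ)⁻¹ •
        ∑ g, (U g : Matrix A A ℂ) * ptraceLeft (vecState vb) * (U g : Matrix A A ℂ)ᴴ) ∧
      𝒟.D (idTensor N (vecState v)) (idTensor M (vecState v))
        ≤ 𝒟.D (idTensor N (vecState vb)) (idTensor M (vecState vb)) := by
  classical
  have hcard0 : (Fintype.card G : ℂ) ≠ 0 := Nat.cast_ne_zero.mpr Fintype.card_ne_zero
  set cG : ℂ := (((Real.sqrt (Fintype.card G))⁻¹ : ℝ) : ℂ) with hcGdef
  have hcc : cG * star cG = (Fintype.card G : ℂ)⁻¹ := by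
    rw [hcGdef, Complex.star_def, Complex.conj_ofReal, ← Complex.ofReal_mul, ← mul_inv,
      Real.mul_self_sqrt (Nat.cast_nonneg _), Complex.ofReal_inv, Complex.ofReal_natCast]
  set Y : Matrix (G × A) A ℂ := Matrix.of (fun p a =>
      cG * ∑ a1, (U p.1 : Matrix A A ℂ) a a1 * v (p.2, a1)) with hYdef
  have hw : ∀ q : (G × A) × A, (fun q : (G × A) × A => Y q.1 q.2) q
      = cG * ∑ a1, (U q.1.1 : Matrix A A ℂ) q.2 a1 * v (q.1.2, a1) := fun q => by
    rw [hYdef]; rfl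
  set w : (G × A) × A → ℂ := fun q => Y q.1 q.2 with hwdef
  have hredY : ptraceLeft (vecState w) = (Fintype.card G : ℂ)⁻¹ •
      ∑ g, (U g : Matrix A A ℂ) * ptraceLeft (vecState v) * (U g : Matrix A A ℂ)ᴴ := by
    have h := ptrace_phi (fun g => (U g : Matrix A A ℂ)) v cG w hw
    rwa [hcc] at h
  have hT : (Yᴴ * Y).PosSemidef := Matrix.posSemidef_conjTranspose_mul_self Y
  have hSherm : (sqrtOf hT)ᴴ = (sqrtOf hT) := sqrtOf_herm hT
  have hGram : (sqrtOf hT)ᴴ * (sqrtOf hT) = Yᴴ * Y := by rw [hSherm, sqrtOf_mul_self hT]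
  set vb : A × A → ℂ := fun p => (sqrtOf hT) p.1 p.2 with hvbdef
  have hsame : ptraceLeft (vecState vb) = ptraceLeft (vecState w) := by
    ext a a'
    have h1 : ((sqrtOf hT)ᴴ * (sqrtOf hT)) a' a = (Yᴴ * Y) a' a := by rw [hGram]
    simp only [Matrix.mul_apply, conjTranspose_apply] at h1
    show ∑ r, vecState vb (r, a) (r, a') = ∑ p, vecState w (p, a) (p, a')
    calc ∑ r, vecState vb (r, a) (r, a')
        = ∑ r, star ((sqrtOf hT) r a') * (sqrtOf hT) r a := by
          refine Finset.sum_congr rfl fun r _ => ?_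
          simp [vecState, hvbdef, mul_comm]
      _ = ∑ p, star (Y p a') * Y p a := h1
      _ = ∑ p, vecState w (p, a) (p, a') := by
          refine Finset.sum_congr rfl fun p _ => ?_
          simp [vecState, hwdef, mul_comm]
  have hvbred : ptraceLeft (vecState vb) = (Fintype.card G : ℂ)⁻¹ •
      ∑ g, (U g : Matrix A A ℂ) * ptraceLeft (vecState v) * (U g : Matrix A A ℂ)ᴴ :=
    hsame.trans hredY
  have htrv : (ptraceLeft (vecState v)).trace = 1 := by rw [trace_ptraceLeft, hv.2]
  have htravg : ((Fintype.card G : ℂ)⁻¹ • ∑ g, (U g : Matrix A A ℂ) *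
      ptraceLeft (vecState v) * (U g : Matrix A A ℂ)ᴴ).trace = 1 :=
    trace_avg (fun g => U g) _ htrv
  have hdensb : IsDensity (vecState vb) := by
    refine ⟨vecState_posSemidef _, ?_⟩
    rw [← trace_ptraceLeft, hvbred]
    exact htravg
  have hdensw : IsDensity (vecState w) := by
    refine ⟨vecState_posSemidef _, ?_⟩
    rw [← trace_ptraceLeft, hredY]
    exact htravg
  obtain ⟨κ, hκ1, hκK, hκ0⟩ := transfer_exists (sqrtOf hT) Y hGram
  set Ξ := ∑ j : Option A, conjMap (κ j ⊗ₖ (1 : Matrix B B ℂ)) with hΞdef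
  have hΞ : IsCPTP Ξ := by
    rw [hΞdef]
    have h1 : ∀ j : Option A, (κ j ⊗ₖ (1 : Matrix B B ℂ))ᴴ * (κ j ⊗ₖ (1 : Matrix B B ℂ))
        = ((κ j)ᴴ * κ j) ⊗ₖ (1 : Matrix B B ℂ) := fun j => by
      rw [kron_conjTranspose, conjTranspose_one, ← Matrix.mul_kronecker_mul, Matrix.one_mul]
    refine krausCPTP _ ?_
    rw [Finset.sum_congr rfl fun j _ => h1 j, ← sum_kron, hκ1, Matrix.one_kronecker_one]
  have hΞact : ∀ (Φ : Matrix A A ℂ →ₗ[ℂ] Matrix B B ℂ),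
      Ξ (idTensor Φ (vecState vb)) = idTensor Φ (vecState w) := by
    intro Φ
    rw [hΞdef, LinearMap.sum_apply]
    rw [Finset.sum_congr rfl fun j _ => (idTensor_conj_comm Φ (κ j) (vecState vb)).symm]
    rw [← map_sum]
    congr 1
    rw [Fintype.sum_option]
    have hnone : conjMap (κ none ⊗ₖ (1 : Matrix A A ℂ)) (vecState vb) = vecState w := by
      rw [conjMap_vecState, hvbdef, kron_one_mulVec (κ none) (sqrtOf hT)]
      simp only [hκK]
      rfl
    have hsome : ∀ i, conjMap (κ (some i) ⊗ₖ (1 : Matrix A A ℂ)) (vecState vb) = 0 := by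
      intro i
      rw [conjMap_vecState, hvbdef, kron_one_mulVec (κ (some i)) (sqrtOf hT)]
      simp only [hκ0 i]
      ext p q
      simp [vecState]
    rw [hnone, Finset.sum_congr rfl fun i _ => hsome i]
    simp
  set Θ := ∑ g : G, conjMap ((bra g : Matrix A (G × A) ℂ) ⊗ₖ (V g : Matrix B B ℂ)ᴴ)
    with hΘdef
  have hΘ : IsCPTP Θ := by
    rw [hΘdef]
    have h1 : ∀ g : G, ((bra g : Matrix A (G × A) ℂ) ⊗ₖ (V g : Matrix B B ℂ)ᴴ)ᴴ *
        ((bra g : Matrix A (G × A) ℂ) ⊗ₖ (V g : Matrix B B ℂ)ᴴ)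
        = ((bra g : Matrix A (G × A) ℂ)ᴴ * (bra g : Matrix A (G × A) ℂ)) ⊗ₖ (1 : Matrix B B ℂ) := fun g => by
      have h2 : (V g : Matrix B B ℂ) * (V g : Matrix B B ℂ)ᴴ = 1 := by
        have h := (V g).2
        rw [Matrix.mem_unitaryGroup_iff] at h
        simpa [Matrix.star_eq_conjTranspose] using h
      rw [kron_conjTranspose, ← Matrix.mul_kronecker_mul, Matrix.conjTranspose_conjTranspose,
        h2]
    refine krausCPTP _ ?_
    rw [Finset.sum_congr rfl fun g _ => h1 g, ← sum_kron, bra_sum, Matrix.one_kronecker_one]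
  have hΘact : ∀ (Φ : Matrix A A ℂ →ₗ[ℂ] Matrix B B ℂ), CovariantChan U V Φ →
      Θ (idTensor Φ (vecState w)) = idTensor Φ (vecState v) := by
    intro Φ hcov
    rw [hΘdef, LinearMap.sum_apply]
    have hterm : ∀ g : G,
        conjMap ((bra g : Matrix A (G × A) ℂ) ⊗ₖ (V g : Matrix B B ℂ)ᴴ)
            (idTensor Φ (vecState w))
          = (Fintype.card G : ℂ)⁻¹ • idTensor Φ (vecState v) := by
      intro g
      rw [conj_braKron]
      have hVV : (V g : Matrix B B ℂ)ᴴ * (V g : Matrix B B ℂ) = 1 := by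
        have h := (V g).2
        rw [Matrix.mem_unitaryGroup_iff'] at h
        simpa [Matrix.star_eq_conjTranspose] using h
      have hInner : ∀ p q : A × B, ((V g : Matrix B B ℂ)ᴴ *
            (Matrix.of fun β β' => idTensor Φ (vecState w) ((g, p.1), β) ((g, q.1), β'))
            * ((V g : Matrix B B ℂ)ᴴ)ᴴ)
          = (Fintype.card G : ℂ)⁻¹ •
              Φ (Matrix.of fun a a' => vecState v (p.1, a) (q.1, a')) := by
        intro p q
        have hIn : (Matrix.of fun β β' =>
              idTensor Φ (vecState w) ((g, p.1), β) ((g, q.1), β'))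
            = Φ (Matrix.of fun a a' => vecState w ((g, p.1), a) ((g, q.1), a')) := rfl
        rw [hIn, phi_slice (fun g => ((U g : Matrix A A ℂ))) v cG w hw g g p.1 q.1,
          LinearMap.map_smul, hcc, ← hcov g, Matrix.conjTranspose_conjTranspose,
          Matrix.mul_smul, Matrix.smul_mul]
        congr 1
        exact sandwich _ _ hVV
      ext pq1 pq2
      rw [of_apply, hInner pq1 pq2]
      simp [Matrix.smul_apply, idTensor_apply]
    rw [Finset.sum_congr rfl fun g _ => hterm g]
    rw [Finset.sum_const, Finset.card_univ, ← Nat.cast_smul_eq_nsmul ℂ, smul_smul,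
      mul_inv_cancel₀ hcard0, one_smul]
  refine ⟨vb, hdensb, ?_, ?_⟩
  · rw [hvbred]
    exact (avg_invariant U (ptraceLeft (vecState v))).symm
  · have dens_bN := isDensity_idTensor hN (vecState vb) hdensb
    have psd_bM := posSemidef_idTensor hM (vecState vb) hdensb.1
    have dens_wN := isDensity_idTensor hN (vecState w) hdensw
    have psd_wM := posSemidef_idTensor hM (vecState w) hdensw.1
    have step1 := 𝒟.data_proc Ξ hΞ _ _ dens_bN psd_bM
    have step2 := 𝒟.data_proc Θ hΘ _ _ dens_wN psd_wM
    rw [hΞact N, hΞact M] at step1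
    rw [hΘact N hcovN, hΘact M hcovM] at step2
    exact step2.trans step1

end ChDAux
end Aux

end
/-- For jointly covariant channels, the generalized channel divergence is
achieved on pure states whose reduced state is invariant under the symmetrizing channel. -/
theorem chanDiv_eq_sup_over_invariant_inputs
    {G A B : Type} [Group G] [Fintype G]
    [Fintype A] [DecidableEq A] [Fintype B] [DecidableEq B]
    (U : G →* Matrix.unitaryGroup A ℂ) (V : G →* Matrix.unitaryGroup B ℂ)
    (N M : Matrix A A ℂ →ₗ[ℂ] Matrix B B ℂ) (hN : IsCPTP N) (hM : IsCPTP M)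
    (hcovN : CovariantChan U V N) (hcovM : CovariantChan U V M)
    (𝒟 : GenDivergence) :
    chanDiv 𝒟 N M =
      ⨆ ψ : {v : A × A → ℂ // IsDensity (vecState v) ∧
          ptraceLeft (vecState v) = (Fintype.card G : ℂ)⁻¹ •
            ∑ g, (U g : Matrix A A ℂ) * ptraceLeft (vecState v) * (U g : Matrix A A ℂ)ᴴ},
        𝒟.D (idTensor N (vecState ψ.1)) (idTensor M (vecState ψ.1)) := by
  classical
  cases isEmpty_or_nonempty A with
  | inl hA =>
    have hempty : ∀ u : A × A → ℂ, ¬ IsDensity (vecState u) := by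
      intro u hu
      have h := hu.2
      have h0 : (vecState u).trace = 0 := by
        simp [Matrix.trace]
      rw [h0] at h
      exact zero_ne_one h
    haveI i1 : IsEmpty {v : A × A → ℂ // IsDensity (vecState v)} :=
      ⟨fun x => hempty x.1 x.2⟩
    haveI i2 : IsEmpty {v : A × A → ℂ // IsDensity (vecState v) ∧
        ptraceLeft (vecState v) = (Fintype.card G : ℂ)⁻¹ •
          ∑ g, (U g : Matrix A A ℂ) * ptraceLeft (vecState v) * (U g : Matrix A A ℂ)ᴴ} :=
      ⟨fun x => hempty x.1 x.2.1⟩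
    unfold chanDiv
    rw [Real.iSup_of_isEmpty, Real.iSup_of_isEmpty]
  | inr hA =>
    haveI hne : Nonempty {v : A × A → ℂ // IsDensity (vecState v)} := by
      obtain ⟨a0⟩ := hA
      refine ⟨⟨fun p => if p = (a0, a0) then 1 else 0, ChDAux.vecState_posSemidef _, ?_⟩⟩
      rw [ChDAux.trace_vecState]
      simp [apply_ite star]
    unfold chanDiv
    refine ChDAux.real_iSup_eq _ _ ?_ ?_
    · rintro ⟨v, hv, hvinv⟩
      exact ⟨⟨v, hv⟩, rfl⟩
    · rintro ⟨v, hv⟩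
      obtain ⟨vb, h1, h2, h3⟩ := ChDAux.key_step U V N M hN hM hcovN hcovM 𝒟 v hv
      exact ⟨⟨vb, h1, h2⟩, h3⟩
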